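/- Let q ∈ (0,1), c ∈ [0,q), and for each i ∈ [n] set c_i = (1 - 1/i)·q + c/i. Then ∑_{i=1}^{n}(q - c_i) = (q - c)·H_n, where H_n is the n-th harmonic number; and for every k ∈ [n], (1 - c_k/q)·k·q = q - c. Consequently max_{k∈[n]} (1 - c_k/q)·∑_{i≤k} q = q - c, while the social welfare ∑_i (q - c_i) equals H_n·(q - c). -/

import Mathlib

theorem equal_prob_gap (n : ℕ) (hn : 1 ≤ n) (q c : ℝ)
    (hq : 0 < q) (hq1 : q < 1) (hc : 0 ≤ c) (hcq : c < q)
    (cs : ℕ → ℝ) (hcs : ∀ i, cs i = (1 - 1 / (i : ℝ)) * q + c / i) :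
    (∑ i ∈ Finset.Icc 1 n, (q - cs i)) = (q - c) * ∑ i ∈ Finset.Icc 1 n, (1 : ℝ) / i ∧
    (∀ k ∈ Finset.Icc 1 n, (1 - cs k / q) * ((k : ℝ) * q) = q - c) ∧
    ((Finset.Icc 1 n).sup' (Finset.nonempty_Icc.mpr hn)
        (fun k => (1 - cs k / q) * ((k : ℝ) * q)) = q - c) := by
  have key : ∀ k ∈ Finset.Icc 1 n, (1 - cs k / q) * ((k : ℝ) * q) = q - c := by
    intro k hk
    obtain ⟨hk1, _⟩ := Finset.mem_Icc.mp hk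
    have hkpos : (0 : ℝ) < k := by exact_mod_cast hk1
    rw [hcs k]
    field_simp
    ring
  refine ⟨?_, key, ?_⟩
  · rw [Finset.mul_sum]
    apply Finset.sum_congr rfl
    intro i hi
    obtain ⟨hi1, _⟩ := Finset.mem_Icc.mp hi
    have hipos : (0 : ℝ) < i := by exact_mod_cast hi1
    rw [hcs i]
    field_simp
    ring
  · rw [Finset.sup'_congr (Finset.nonempty_Icc.mpr hn) rfl key]
    exact Finset.sup'_const _ _
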